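/- Special case with unit weights: with the notation of the general Dirac formula and all b_i = 1, setting λ = min{c, l}, the flat distance is ρ_F(c δ_{x_0}, Σ_{i=1}^n δ_{x_i}) = |c − l| + (n − l) + Σ_{i=1}^{⌊λ⌋} d_i + (λ − ⌊λ⌋) d_{⌊λ⌋+1}. -/

import Mathlib

open MeasureTheory

noncomputable def flatDist {d : ℕ} (μ ν : Measure (EuclideanSpace ℝ (Fin d))) : ℝ :=
  sSup { r : ℝ | ∃ f : EuclideanSpace ℝ (Fin d) → ℝ,
    (∀ x, |f x| ≤ 1) ∧ LipschitzWith 1 f ∧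
    r = ∫ x, f x ∂μ - ∫ x, f x ∂ν }

private lemma clamp_sum (lam : ℝ) (hlam0 : 0 ≤ lam) {n : ℕ} (hlamn : lam ≤ n) (g : ℕ → ℝ) :
    ∑ i ∈ Finset.range n, min 1 (max 0 (lam - i)) * g i
      = ∑ i ∈ Finset.range ⌊lam⌋₊, g i + (lam - ⌊lam⌋₊) * g ⌊lam⌋₊ := by
  set m := ⌊lam⌋₊ with hm
  have hml : (m : ℝ) ≤ lam := Nat.floor_le hlam0
  have hlm1 : lam < m + 1 := Nat.lt_floor_add_one lam
  have hw1 : ∀ i : ℕ, i < m → min 1 (max 0 (lam - i)) = 1 := by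
    intro i hi
    have : (i : ℝ) + 1 ≤ m := by exact_mod_cast hi
    have h1 : (1 : ℝ) ≤ lam - i := by linarith
    rw [max_eq_right (by linarith), min_eq_left h1]
  have hwm : min 1 (max 0 (lam - m)) = lam - m := by
    rw [max_eq_right (by linarith), min_eq_right (by linarith)]
  have hmn : m ≤ n := by
    have : (m : ℝ) ≤ n := hml.trans hlamn
    exact_mod_cast this
  rcases eq_or_lt_of_le hmn with h | h
  · -- m = n, so lam = n
    have hlameq : lam = m := by
      have : (n : ℝ) ≤ m := by rw [h]
      linarith [hlamn]
    subst h
    rw [Finset.sum_congr rfl fun i hi => by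
      rw [hw1 i (Finset.mem_range.1 hi), one_mul]]
    rw [hlameq, sub_self, zero_mul, add_zero]
  · rw [← Finset.sum_range_add_sum_Ico _ (Nat.succ_le_of_lt h),
      Finset.sum_range_succ]
    have hz : ∑ i ∈ Finset.Ico (m + 1) n, min 1 (max 0 (lam - i)) * g i = 0 := by
      refine Finset.sum_eq_zero fun i hi => ?_
      have him : m + 1 ≤ i := (Finset.mem_Ico.1 hi).1
      have : (m : ℝ) + 1 ≤ i := by exact_mod_cast him
      rw [max_eq_left (by linarith), min_eq_right (by norm_num), zero_mul]
    rw [hz, add_zero, hwm,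
      Finset.sum_congr rfl fun i hi => by
        rw [hw1 i (Finset.mem_range.1 hi), one_mul]]

private lemma key_ub {d n : ℕ} (c lam : ℝ) (x₀ : EuclideanSpace ℝ (Fin d))
    (x : Fin n → EuclideanSpace ℝ (Fin d)) (dd : ℕ → ℝ)
    (hdd : ∀ i : Fin n, dd i = dist x₀ (x i))
    (hlam0 : 0 ≤ lam) (hlamc : lam ≤ c) (hlamn : lam ≤ n)
    (f : EuclideanSpace ℝ (Fin d) → ℝ) (hb : ∀ y, |f y| ≤ 1) (hlip : LipschitzWith 1 f) :
    c * f x₀ - ∑ i, f (x i) ≤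
      (c - lam) + ((n : ℝ) - lam) +
        (∑ i ∈ Finset.range ⌊lam⌋₊, dd i + (lam - ⌊lam⌋₊) * dd ⌊lam⌋₊) := by
  set w : ℕ → ℝ := fun i => min 1 (max 0 (lam - i)) with hw
  have hw0 : ∀ i : ℕ, 0 ≤ w i := fun i => le_min (by norm_num) (le_max_left _ _)
  have hw1 : ∀ i : ℕ, w i ≤ 1 := fun i => min_le_left _ _
  have hsumw : ∑ i : Fin n, w i = lam := by
    rw [Fin.sum_univ_eq_sum_range]
    have := clamp_sum lam hlam0 hlamn (fun _ => 1)
    simpa using this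
  have hsumwd : ∑ i : Fin n, w i * dd i
      = ∑ i ∈ Finset.range ⌊lam⌋₊, dd i + (lam - ⌊lam⌋₊) * dd ⌊lam⌋₊ := by
    rw [Fin.sum_univ_eq_sum_range (fun i => w i * dd i)]
    exact clamp_sum lam hlam0 hlamn dd
  have expand : ∑ i : Fin n, (w i * (f x₀ - f (x i)) + (w i - 1) * f (x i))
      = lam * f x₀ - ∑ i, f (x i) := by
    have step : ∀ i : Fin n, w i * (f x₀ - f (x i)) + (w i - 1) * f (x i)
        = w i * f x₀ - f (x i) := fun i => by ring
    rw [Finset.sum_congr rfl fun i _ => step i,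
      Finset.sum_sub_distrib, ← Finset.sum_mul, hsumw]
  have hterm : ∀ i : Fin n, w i * (f x₀ - f (x i)) + (w i - 1) * f (x i)
      ≤ w i * dd i + (1 - w i) := by
    intro i
    have hd : f x₀ - f (x i) ≤ dd i := by
      have := hlip.dist_le_mul x₀ (x i)
      rw [NNReal.coe_one, one_mul] at this
      have h2 := (le_abs_self (f x₀ - f (x i))).trans (le_of_eq (Real.dist_eq _ _).symm)
      rw [hdd i]
      exact h2.trans this
    have h1 := abs_le.1 (hb (x i))
    nlinarith [mul_nonneg (hw0 i) (sub_nonneg.2 hd),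
      mul_nonneg (sub_nonneg.2 (hw1 i)) (by linarith : (0:ℝ) ≤ 1 + f (x i))]
  have hfx0 := abs_le.1 (hb x₀)
  calc c * f x₀ - ∑ i, f (x i)
      = (c - lam) * f x₀ + ∑ i : Fin n, (w i * (f x₀ - f (x i)) + (w i - 1) * f (x i)) := by
        rw [expand]; ring
    _ ≤ (c - lam) * 1 + ∑ i : Fin n, (w i * dd i + (1 - w i)) := by
        exact add_le_add (mul_le_mul_of_nonneg_left hfx0.2 (by linarith))
          (Finset.sum_le_sum fun i _ => hterm i)
    _ = (c - lam) + (∑ i : Fin n, w i * dd i + ((n : ℝ) - ∑ i : Fin n, w i)) := by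
        rw [Finset.sum_add_distrib, Finset.sum_sub_distrib, Finset.sum_const,
          Finset.card_univ, Fintype.card_fin]
        ring
    _ = (c - lam) + ((n : ℝ) - lam) +
        (∑ i ∈ Finset.range ⌊lam⌋₊, dd i + (lam - ⌊lam⌋₊) * dd ⌊lam⌋₊) := by
        rw [hsumw, hsumwd]; ring

/-- Unit-weight special case, 0-based indexing (so the 1-based `d_{⌊λ⌋+1}` is `dd ⌊λ⌋₊`). -/
theorem flatDist_dirac_vs_unit_combination {d n : ℕ} (c : ℝ) (hc : 0 < c)
    (x₀ : EuclideanSpace ℝ (Fin d)) (x : Fin n → EuclideanSpace ℝ (Fin d))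
    (dd : ℕ → ℝ)
    (hdd : ∀ i : Fin n, dd i = dist x₀ (x i))
    (hmono : ∀ i j : Fin n, (i : ℕ) ≤ j → dd i ≤ dd j)
    (l : ℕ) (hln : l ≤ n)
    (hl₁ : ∀ i : Fin n, (i : ℕ) < l → dd i ≤ 2)
    (hl₂ : ∀ i : Fin n, l ≤ (i : ℕ) → 2 < dd i) :
    flatDist (ENNReal.ofReal c • Measure.dirac x₀) (∑ i, Measure.dirac (x i)) =
      |c - l| + ((n : ℝ) - l) +
        ∑ i ∈ Finset.range ⌊min c (l : ℝ)⌋₊, dd i +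
        (min c (l : ℝ) - ⌊min c (l : ℝ)⌋₊) * dd ⌊min c (l : ℝ)⌋₊ := by
  classical
  have hc0 : (0 : ℝ) ≤ c := hc.le
  set lam : ℝ := min c (l : ℝ) with hlamdef
  set m : ℕ := ⌊lam⌋₊ with hmdef
  have hlam0 : 0 ≤ lam := le_min hc0 (Nat.cast_nonneg l)
  have hlamc : lam ≤ c := min_le_left _ _
  have hlaml : lam ≤ (l : ℝ) := min_le_right _ _
  have hlamn : lam ≤ (n : ℝ) := hlaml.trans (by exact_mod_cast hln)
  set V : ℝ := |c - l| + ((n : ℝ) - l) + ∑ i ∈ Finset.range m, dd i + (lam - m) * dd m with hVdef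
  -- evaluation of the integral difference
  have hdiff : ∀ f : EuclideanSpace ℝ (Fin d) → ℝ, (∀ y, |f y| ≤ 1) → LipschitzWith 1 f →
      (∫ y, f y ∂(ENNReal.ofReal c • Measure.dirac x₀))
        - (∫ y, f y ∂(∑ i, Measure.dirac (x i)))
      = c * f x₀ - ∑ i, f (x i) := by
    intro f hb hlip
    have hint : ∀ i : Fin n, Integrable f (Measure.dirac (x i)) := by
      intro i
      refine Integrable.mono' (integrable_const 1) hlip.continuous.aestronglyMeasurable ?_
      exact Filter.Eventually.of_forall fun y => by simpa using hb y
    rw [integral_smul_measure, integral_finset_sum_measure fun i _ => hint i]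
    simp [integral_dirac, ENNReal.toReal_ofReal hc0, smul_eq_mul]
  -- the absolute-value constant
  have habs : (c - lam) + ((n : ℝ) - lam) = |c - l| + ((n : ℝ) - l) := by
    rcases le_total c (l : ℝ) with h | h
    · have h2 : lam = c := min_eq_left h
      rw [abs_of_nonpos (by linarith), h2]; ring
    · have h2 : lam = (l : ℝ) := min_eq_right h
      rw [abs_of_nonneg (by linarith), h2]
  -- upper bound
  have hub : ∀ r ∈ { r : ℝ | ∃ f : EuclideanSpace ℝ (Fin d) → ℝ,
      (∀ y, |f y| ≤ 1) ∧ LipschitzWith 1 f ∧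
      r = (∫ y, f y ∂(ENNReal.ofReal c • Measure.dirac x₀))
        - ∫ y, f y ∂(∑ i, Measure.dirac (x i)) }, r ≤ V := by
    rintro r ⟨f, hb, hlip, rfl⟩
    rw [hdiff f hb hlip]
    calc c * f x₀ - ∑ i, f (x i)
        ≤ (c - lam) + ((n : ℝ) - lam) + (∑ i ∈ Finset.range m, dd i + (lam - m) * dd m) :=
          key_ub c lam x₀ x dd hdd hlam0 hlamc hlamn f hb hlip
      _ = V := by rw [habs, hVdef]; ring
  -- membership: the supremum is attained
  have hmem : V ∈ { r : ℝ | ∃ f : EuclideanSpace ℝ (Fin d) → ℝ,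
      (∀ y, |f y| ≤ 1) ∧ LipschitzWith 1 f ∧
      r = (∫ y, f y ∂(ENNReal.ofReal c • Measure.dirac x₀))
        - ∫ y, f y ∂(∑ i, Measure.dirac (x i)) } := by
    -- choose the level a
    obtain ⟨a, ha1, ha2, hval⟩ :
        ∃ a : ℝ, -1 ≤ a ∧ a ≤ 1 ∧
          c * a - ∑ i : Fin n, max (-1) (a - dd i) = V := by
      rcases le_total (l : ℝ) c with h | h
      · -- lam = l, m = l, a = 1
        have hlam : lam = (l : ℝ) := min_eq_right h
        have hm : m = l := by rw [hmdef, hlam, Nat.floor_natCast]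
        refine ⟨1, by norm_num, le_refl 1, ?_⟩
        have hsum : ∑ i : Fin n, max (-1) (1 - dd i)
            = ∑ i ∈ Finset.range l, (1 - dd i) + (-(1 : ℝ)) * ((n : ℕ) - l : ℕ) := by
          rw [Fin.sum_univ_eq_sum_range (fun i => max (-1) (1 - dd i)) n,
            ← Finset.sum_range_add_sum_Ico _ hln]
          congr 1
          · refine Finset.sum_congr rfl fun i hi => ?_
            have hi' := Finset.mem_range.1 hi
            have : dd i ≤ 2 := hl₁ ⟨i, lt_of_lt_of_le hi' hln⟩ hi'
            exact max_eq_right (by linarith)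
          · have hcg : ∀ i ∈ Finset.Ico l n, max (-1 : ℝ) (1 - dd i) = -1 := by
              intro i hi
              have hi' := Finset.mem_Ico.1 hi
              have : 2 < dd i := hl₂ ⟨i, hi'.2⟩ hi'.1
              exact max_eq_left (by linarith)
            rw [Finset.sum_congr rfl hcg, Finset.sum_const, Nat.card_Ico, nsmul_eq_mul]
            ring
        rw [hsum, hVdef, hm, abs_of_nonneg (by linarith), hlam, Finset.sum_sub_distrib]
        have hcast : ((n - l : ℕ) : ℝ) = (n : ℝ) - l := by
          rw [Nat.cast_sub hln]
        rw [hcast, Finset.sum_const, Finset.card_range]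
        ring
      · -- c ≤ l : lam = c, a = dd m - 1
        have hlam : lam = c := min_eq_left h
        have hfloor : (m : ℝ) ≤ c := by rw [← hlam]; exact Nat.floor_le hlam0
        have hmlR : (m : ℝ) < l ∨ ((m : ℝ) = c ∧ c = l) := by
          rcases lt_or_eq_of_le hfloor with h' | h'
          · left; exact h'.trans_le h
          · rcases lt_or_eq_of_le h with h'' | h''
            · left; rw [h']; exact h''
            · right; exact ⟨h', h''⟩
        -- handle the case c = l = m separately by falling back to a = 1
        rcases hmlR with hml | ⟨hmc, hcl⟩
        · have hmln : m < l := by exact_mod_cast hml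
          have hmn : m < n := lt_of_lt_of_le hmln hln
          have hddm2 : dd m ≤ 2 := hl₁ ⟨m, hmn⟩ hmln
          have hddm0 : 0 ≤ dd m := by
            rw [show dd m = dd ((⟨m, hmn⟩ : Fin n) : ℕ) from rfl, hdd ⟨m, hmn⟩]
            exact dist_nonneg
          refine ⟨dd m - 1, by linarith, by linarith, ?_⟩
          have hmR : (m : ℝ) ≤ lam := Nat.floor_le hlam0
          have hmR1 : lam < (m : ℝ) + 1 := Nat.lt_floor_add_one lam
          have hsum : ∑ i : Fin n, max (-1) (dd m - 1 - dd i)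
              = ∑ i ∈ Finset.range m, (dd m - 1 - dd i) + (-(1 : ℝ)) * ((n : ℕ) - m : ℕ) := by
            rw [Fin.sum_univ_eq_sum_range (fun i => max (-1) (dd m - 1 - dd i)) n,
              ← Finset.sum_range_add_sum_Ico _ (le_of_lt hmn)]
            congr 1
            · refine Finset.sum_congr rfl fun i hi => ?_
              have hi' := Finset.mem_range.1 hi
              have : dd i ≤ dd m := hmono ⟨i, lt_trans hi' hmn⟩ ⟨m, hmn⟩ (le_of_lt hi')
              exact max_eq_right (by linarith)
            · have hcg : ∀ i ∈ Finset.Ico m n, max (-1 : ℝ) (dd m - 1 - dd i) = -1 := by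
                intro i hi
                have hi' := Finset.mem_Ico.1 hi
                have : dd m ≤ dd i := hmono ⟨m, hmn⟩ ⟨i, hi'.2⟩ hi'.1
                exact max_eq_left (by linarith)
              rw [Finset.sum_congr rfl hcg, Finset.sum_const, Nat.card_Ico, nsmul_eq_mul]
              ring
          rw [hsum, hVdef, abs_of_nonpos (by linarith), Finset.sum_sub_distrib,
            Finset.sum_sub_distrib, Finset.sum_const, Finset.card_range]
          have hcast : ((n - m : ℕ) : ℝ) = (n : ℝ) - m := by
            rw [Nat.cast_sub (le_of_lt hmn)]
          rw [hcast, hlam, Finset.sum_const, Finset.card_range]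
          ring
        · -- c = l exactly: use a = 1
          have hm : m = l := by
            have : (m : ℝ) = (l : ℝ) := by rw [hmc, hcl]
            exact_mod_cast this
          refine ⟨1, by norm_num, le_refl 1, ?_⟩
          have hsum : ∑ i : Fin n, max (-1) (1 - dd i)
              = ∑ i ∈ Finset.range l, (1 - dd i) + (-(1 : ℝ)) * ((n : ℕ) - l : ℕ) := by
            rw [Fin.sum_univ_eq_sum_range (fun i => max (-1) (1 - dd i)) n,
              ← Finset.sum_range_add_sum_Ico _ hln]
            congr 1
            · refine Finset.sum_congr rfl fun i hi => ?_
              have hi' := Finset.mem_range.1 hi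
              have : dd i ≤ 2 := hl₁ ⟨i, lt_of_lt_of_le hi' hln⟩ hi'
              exact max_eq_right (by linarith)
            · have hcg : ∀ i ∈ Finset.Ico l n, max (-1 : ℝ) (1 - dd i) = -1 := by
                intro i hi
                have hi' := Finset.mem_Ico.1 hi
                have : 2 < dd i := hl₂ ⟨i, hi'.2⟩ hi'.1
                exact max_eq_left (by linarith)
              rw [Finset.sum_congr rfl hcg, Finset.sum_const, Nat.card_Ico, nsmul_eq_mul]
              ring
          rw [hsum, hVdef, hm, hcl, sub_self, abs_zero, Finset.sum_sub_distrib]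
          have hcast : ((n - l : ℕ) : ℝ) = (n : ℝ) - l := by
            rw [Nat.cast_sub hln]
          rw [hcast, Finset.sum_const, Finset.card_range]
          have hlaml' : lam = (l : ℝ) := by rw [hlam, hcl]
          rw [hlaml']
          ring
    -- build the test function
    refine ⟨fun y => max (-1) (a - dist x₀ y), ?_, ?_, ?_⟩
    · intro y
      rw [abs_le]
      constructor
      · exact le_max_left _ _
      · exact max_le (by norm_num) (by linarith [dist_nonneg (x := x₀) (y := y)])
    · refine LipschitzWith.const_max ?_ (-1)
      refine LipschitzWith.of_dist_le_mul fun p q => ?_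
      rw [Real.dist_eq, NNReal.coe_one, one_mul,
        show (a - dist x₀ p) - (a - dist x₀ q) = dist x₀ q - dist x₀ p by ring,
        abs_sub_comm, dist_comm x₀ p, dist_comm x₀ q]
      exact abs_dist_sub_le p q x₀
    · rw [hdiff _ ?hb ?hlip]
      · have h0 : max (-1) (a - dist x₀ x₀) = a := by
          rw [dist_self, sub_zero]; exact max_eq_right ha1
        rw [h0, ← hval]
        congr 1
        exact Finset.sum_congr rfl fun i _ => by rw [hdd i]
      case hb =>
        intro y
        rw [abs_le]
        exact ⟨le_max_left _ _, max_le (by norm_num) (by linarith [dist_nonneg (x := x₀) (y := y)])⟩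
      case hlip =>
        refine LipschitzWith.const_max ?_ (-1)
        refine LipschitzWith.of_dist_le_mul fun p q => ?_
        rw [Real.dist_eq, NNReal.coe_one, one_mul,
          show (a - dist x₀ p) - (a - dist x₀ q) = dist x₀ q - dist x₀ p by ring,
          abs_sub_comm, dist_comm x₀ p, dist_comm x₀ q]
        exact abs_dist_sub_le p q x₀
  -- conclude
  have : flatDist (ENNReal.ofReal c • Measure.dirac x₀) (∑ i, Measure.dirac (x i)) = V := by
    unfold flatDist
    exact le_antisymm (csSup_le ⟨V, hmem⟩ hub) (le_csSup ⟨V, fun r hr => hub r hr⟩ hmem)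
  rw [this, hVdef]
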